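/- Let m ≥ 1 be an integer and q_m¹(μ) = 11 + 6(m−1)μ + ((3m²−9m−2)/4)μ², so that q_m¹(μ) = (1/((m+1)μ)) · (dP_μ^m/dη)(1/2). For m ≥ 4, q_m¹(μ) > 0 for all μ > 0. For 1 ≤ m ≤ 3, q_m¹ has exactly one positive root μ_m¹, q_m¹ is positive on [0, μ_m¹), and μ_m < μ_m¹, where μ_m is the unique positive root of q_m(μ) = P_μ^m(1/2). Moreover μ₁¹ = √(11/2), μ₂¹ = (3+√31)/2, μ₃¹ = 12+√166. -/

import Mathlib

/-- The representative polynomial `P_μ^m` of type `I_{1,3}` (real variable). -/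
noncomputable def PI13 (m : ℕ) (μ η : ℝ) : ℝ :=
  (1 - μ) * (2 - μ) * (3 - μ) + ((m : ℝ) + 1) * μ * (1 - μ) * (11 - 7 * μ) * η +
    6 * ((m : ℝ) + 1) * ((m : ℝ) + 2) * (1 - μ) * μ ^ 2 * η ^ 2 +
    ((m : ℝ) + 1) * ((m : ℝ) + 2) * ((m : ℝ) + 3) * μ ^ 3 * η ^ 3

/-- `q_m(μ) = P_μ^m(1/2)` for type `I_{1,3}`. -/
noncomputable def qI13 (m : ℕ) (μ : ℝ) : ℝ := PI13 m μ (1 / 2)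

/-- `q_m¹(μ) = 11 + 6(m-1)μ + ((3m²-9m-2)/4)μ²` for type `I_{1,3}`. -/
noncomputable def qI13' (m : ℕ) (μ : ℝ) : ℝ :=
  11 + 6 * ((m : ℝ) - 1) * μ + ((3 * (m : ℝ) ^ 2 - 9 * (m : ℝ) - 2) / 4) * μ ^ 2

lemma deriv_PI13 (m : ℕ) (μ x : ℝ) :
    deriv (fun η : ℝ => PI13 m μ η) x
      = ((m:ℝ)+1)*μ*(1-μ)*(11-7*μ)
        + 6*((m:ℝ)+1)*((m:ℝ)+2)*(1-μ)*μ^2*(2*x)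
        + ((m:ℝ)+1)*((m:ℝ)+2)*((m:ℝ)+3)*μ^3*(3*x^2) := by
  have h := (((hasDerivAt_const x ((1 - μ) * (2 - μ) * (3 - μ))).add
      ((hasDerivAt_id' x).const_mul (((m:ℝ) + 1) * μ * (1 - μ) * (11 - 7 * μ)))).add
      ((hasDerivAt_pow 2 x).const_mul (6 * ((m:ℝ) + 1) * ((m:ℝ) + 2) * (1 - μ) * μ ^ 2))).add
      ((hasDerivAt_pow 3 x).const_mul (((m:ℝ) + 1) * ((m:ℝ) + 2) * ((m:ℝ) + 3) * μ ^ 3))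
  have h2 : HasDerivAt (fun η : ℝ => PI13 m μ η) _ x := h
  rw [h2.deriv]; push_cast; ring

lemma q1_eq (μ : ℝ) : qI13' 1 μ = 11 - 2 * μ ^ 2 := by
  simp only [qI13']; push_cast; ring

lemma q2_eq (μ : ℝ) : qI13' 2 μ = 11 + 6 * μ - 2 * μ ^ 2 := by
  simp only [qI13']; push_cast; ring

lemma q3_eq (μ : ℝ) : qI13' 3 μ = 11 + 12 * μ - μ ^ 2 / 2 := by
  simp only [qI13']; push_cast; ring

lemma c1_eq (μ : ℝ) : qI13 1 μ = 6 - 3 * μ ^ 2 := by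
  simp only [qI13, PI13]; push_cast; ring

lemma c2_eq (μ : ℝ) : qI13 2 μ = 6 + 11/2 * μ - 3 * μ ^ 2 - μ ^ 3 := by
  simp only [qI13, PI13]; push_cast; ring

lemma c3_eq (μ : ℝ) : qI13 3 μ = 6 + 11 * μ - 2 * μ ^ 3 := by
  simp only [qI13, PI13]; push_cast; ring

lemma r1_root : qI13' 1 (Real.sqrt (11 / 2)) = 0 := by
  have h : Real.sqrt (11/2) ^ 2 = 11/2 := Real.sq_sqrt (by norm_num)
  rw [q1_eq]; linarith

lemma r2_root : qI13' 2 ((3 + Real.sqrt 31) / 2) = 0 := by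
  have h : Real.sqrt 31 ^ 2 = 31 := Real.sq_sqrt (by norm_num)
  rw [q2_eq]; nlinarith [h]

lemma r3_root : qI13' 3 (12 + Real.sqrt 166) = 0 := by
  have h : Real.sqrt 166 ^ 2 = 166 := Real.sq_sqrt (by norm_num)
  rw [q3_eq]; nlinarith [h]

lemma r1_uniq (y : ℝ) (hy : 0 < y) (h : qI13' 1 y = 0) : y = Real.sqrt (11/2) := by
  rw [q1_eq] at h
  rw [show (11/2 : ℝ) = y ^ 2 by linarith, Real.sqrt_sq hy.le]

lemma r2_uniq (y : ℝ) (hy : 0 < y) (h : qI13' 2 y = 0) : y = (3 + Real.sqrt 31) / 2 := by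
  rw [q2_eq] at h
  have h3 : 3 < y := by nlinarith
  have : Real.sqrt 31 = 2 * y - 3 := by
    rw [show (31:ℝ) = (2*y-3)^2 by nlinarith, Real.sqrt_sq (by linarith)]
  linarith

lemma r3_uniq (y : ℝ) (hy : 0 < y) (h : qI13' 3 y = 0) : y = 12 + Real.sqrt 166 := by
  rw [q3_eq] at h
  have h3 : 12 < y := by nlinarith
  have : Real.sqrt 166 = y - 12 := by
    rw [show (166:ℝ) = (y-12)^2 by nlinarith, Real.sqrt_sq (by linarith)]
  linarith


/-- Sign of `(dP_μ^m/dη)(1/2)` for type `I_{1,3}`: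
`q_m¹(μ) = (1/((m+1)μ))·(dP_μ^m/dη)(1/2)`; it is positive for all `μ > 0` when
`m ≥ 4`; for `1 ≤ m ≤ 3` it has a unique positive root `μ_m¹`, is positive on
`[0, μ_m¹)`, and `μ_m < μ_m¹` where `μ_m` is the unique positive root of `q_m`.
Explicitly `μ₁¹ = √(11/2)`, `μ₂¹ = (3+√31)/2`, `μ₃¹ = 12+√166`. -/
theorem qI13'_sign :
    (∀ m : ℕ, 1 ≤ m → ∀ μ : ℝ, 0 < μ →
      qI13' m μ = (1 / (((m : ℝ) + 1) * μ)) * deriv (fun η : ℝ => PI13 m μ η) (1 / 2)) ∧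
    (∀ m : ℕ, 4 ≤ m → ∀ μ : ℝ, 0 < μ → 0 < qI13' m μ) ∧
    (∀ m : ℕ, 1 ≤ m → m ≤ 3 → ∃! r : ℝ, 0 < r ∧ qI13' m r = 0) ∧
    (∀ m : ℕ, 1 ≤ m → m ≤ 3 → ∀ r : ℝ, 0 < r → qI13' m r = 0 →
      (∀ μ : ℝ, 0 ≤ μ → μ < r → 0 < qI13' m μ) ∧
      (∀ s : ℝ, 0 < s → qI13 m s = 0 → s < r)) ∧
    qI13' 1 (Real.sqrt (11 / 2)) = 0 ∧
    qI13' 2 ((3 + Real.sqrt 31) / 2) = 0 ∧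
    qI13' 3 (12 + Real.sqrt 166) = 0 := by
  refine ⟨?_, ?_, ?_, ?_, r1_root, r2_root, r3_root⟩
  · intro m hm μ hμ
    rw [deriv_PI13]
    have h1 : ((m:ℝ) + 1) * μ ≠ 0 := by positivity
    field_simp [qI13']
    simp only [qI13']; ring
  · intro m hm μ hμ
    have hm' : (4:ℝ) ≤ (m:ℝ) := by exact_mod_cast hm
    simp only [qI13']
    nlinarith [sq_nonneg μ, sq_nonneg ((m:ℝ) - 4), mul_pos hμ hμ]
  · intro m hm1 hm3
    interval_cases m
    · exact ⟨Real.sqrt (11/2), ⟨Real.sqrt_pos.2 (by norm_num), r1_root⟩,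
        fun y ⟨hy, h⟩ => r1_uniq y hy h⟩
    · exact ⟨(3 + Real.sqrt 31) / 2,
        ⟨by positivity, r2_root⟩, fun y ⟨hy, h⟩ => r2_uniq y hy h⟩
    · exact ⟨12 + Real.sqrt 166, ⟨by positivity, r3_root⟩,
        fun y ⟨hy, h⟩ => r3_uniq y hy h⟩
  · intro m hm1 hm3 r hr hroot
    interval_cases m
    · rw [q1_eq] at hroot
      constructor
      · intro μ hμ0 hμr
        rw [q1_eq]
        nlinarith [mul_pos (sub_pos.2 hμr) (show (0:ℝ) < r + μ by linarith)]
      · intro s hs hcs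
        rw [c1_eq] at hcs
        nlinarith [mul_pos hs hr]
    · rw [q2_eq] at hroot
      have h3 : 3 < r := by nlinarith
      constructor
      · intro μ hμ0 hμr
        rw [q2_eq]
        nlinarith [mul_pos (sub_pos.2 hμr) (show (0:ℝ) < r + μ - 3 by linarith)]
      · intro s hs hcs
        rw [c2_eq] at hcs
        have : s < 3 := by nlinarith [mul_pos hs hs, mul_pos (mul_pos hs hs) hs]
        linarith
    · rw [q3_eq] at hroot
      have h3 : 24 < r := by nlinarith
      constructor
      · intro μ hμ0 hμr
        rw [q3_eq]
        nlinarith [mul_pos (sub_pos.2 hμr) (show (0:ℝ) < r + μ - 24 by linarith)]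
      · intro s hs hcs
        rw [c3_eq] at hcs
        have : s < 12 := by nlinarith [mul_pos hs hs, mul_pos (mul_pos hs hs) hs]
        linarith
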